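/- Let f : ℝⁿ → ℝ be convex and continuously differentiable, μ > 0, φ(x) = f(x) + μ‖x‖₁, and let x ∈ ℝⁿ. Define g(x) ∈ ℝⁿ componentwise by: gᵢ(x) = ∇ᵢf(x) + μ if xᵢ > 0, or if xᵢ = 0 and ∇ᵢf(x) + μ < 0; gᵢ(x) = ∇ᵢf(x) − μ if xᵢ < 0, or if xᵢ = 0 and ∇ᵢf(x) − μ > 0; and gᵢ(x) = 0 otherwise. Then (a) g(x) is a subgradient of φ at x, i.e. φ(y) ≥ φ(x) + ⟨g(x), y − x⟩ for all y ∈ ℝⁿ, and (b) for every v ∈ ℝⁿ satisfying φ(y) ≥ φ(x) + ⟨v, y − x⟩ for all y ∈ ℝⁿ, one has ‖g(x)‖₂ ≤ ‖v‖₂; that is, g(x) is the minimum Euclidean-norm subgradient of φ at x. -/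

import Mathlib

open scoped InnerProductSpace
open Filter

section Aux

variable {E : Type*} [NormedAddCommGroup E] [InnerProductSpace ℝ E] [CompleteSpace E]

lemma aux_hasDerivAt_line (f : E → ℝ) (x d : E) (hf : DifferentiableAt ℝ f x) :
    HasDerivAt (fun t : ℝ => f (x + t • d)) ⟪gradient f x, d⟫_ℝ 0 := by
  have hgrad : HasFDerivAt f ((InnerProductSpace.toDual ℝ E) (gradient f x)) x :=
    hf.hasGradientAt.hasFDerivAt
  have hline : HasDerivAt (fun t : ℝ => x + t • d) d 0 := by
    simpa using ((hasDerivAt_id (0 : ℝ)).smul_const d).const_add x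
  have hgrad' : HasFDerivAt f ((InnerProductSpace.toDual ℝ E) (gradient f x)) (x + (0:ℝ) • d) := by
    simpa using hgrad
  have := hgrad'.comp_hasDerivAt (0 : ℝ) hline
  simpa [Function.comp_def] using this

lemma aux_convex_grad (f : E → ℝ) (hconv : ConvexOn ℝ Set.univ f)
    (hf : Differentiable ℝ f) (x y : E) :
    f x + ⟪gradient f x, y - x⟫_ℝ ≤ f y := by
  set h : ℝ → ℝ := fun t => f (x + t • (y - x)) with hh
  have hconv' : ConvexOn ℝ Set.univ h := by
    have := hconv.comp_affineMap (AffineMap.lineMap x y)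
    have he : h = f ∘ (AffineMap.lineMap x y : ℝ →ᵃ[ℝ] E) := by
      funext t
      simp [h, AffineMap.lineMap_apply, add_comm]
    rw [he]
    simpa using this
  have hd : HasDerivAt h ⟪gradient f x, y - x⟫_ℝ 0 := aux_hasDerivAt_line f x (y - x) (hf x)
  have := hconv'.le_slope_of_hasDerivAt (Set.mem_univ 0) (Set.mem_univ 1) one_pos hd
  rw [slope_def_field] at this
  simp [h] at this
  have e : ⟪gradient f x, y - x⟫_ℝ = fderiv ℝ f x y - fderiv ℝ f x x := by
    rw [← map_sub]; simp [gradient, InnerProductSpace.toDual_symm_apply]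
  linarith [this]

lemma aux_le_of_slope_right {h : ℝ → ℝ} {d c : ℝ} (hd : HasDerivAt h d 0)
    (hb : ∀ᶠ t in nhdsWithin 0 (Set.Ioi 0), c ≤ slope h 0 t) : c ≤ d := by
  have ht : Tendsto (slope h 0) (nhdsWithin 0 {(0:ℝ)}ᶜ) (nhds d) :=
    hasDerivAt_iff_tendsto_slope.1 hd
  have ht' : Tendsto (slope h 0) (nhdsWithin 0 (Set.Ioi 0)) (nhds d) :=
    ht.mono_left (nhdsWithin_mono _ (fun t ht => ne_of_gt ht))
  exact ge_of_tendsto ht' hb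

lemma aux_le_of_slope_left {h : ℝ → ℝ} {d c : ℝ} (hd : HasDerivAt h d 0)
    (hb : ∀ᶠ t in nhdsWithin 0 (Set.Iio 0), slope h 0 t ≤ c) : d ≤ c := by
  have ht : Tendsto (slope h 0) (nhdsWithin 0 {(0:ℝ)}ᶜ) (nhds d) :=
    hasDerivAt_iff_tendsto_slope.1 hd
  have ht' : Tendsto (slope h 0) (nhdsWithin 0 (Set.Iio 0)) (nhds d) :=
    ht.mono_left (nhdsWithin_mono _ (fun t ht => ne_of_lt ht))
  exact le_of_tendsto ht' hb

end Aux

lemma aux_inner_eq {n : ℕ} (a b : EuclideanSpace ℝ (Fin n)) :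
    ⟪a, b⟫_ℝ = ∑ i, a i * b i := by
  rw [PiLp.inner_apply]
  simp [RCLike.inner_apply, mul_comm]

/-- the vector `g(x)` defined componentwise from the gradient of `f`
and `μ` is a subgradient of `φ = f + μ‖·‖₁` at `x`, and it has the minimum
Euclidean norm among all subgradients of `φ` at `x`. -/
theorem stmt_14 {n : ℕ} (hn : 0 < n)
    (f : EuclideanSpace ℝ (Fin n) → ℝ) (mu : ℝ) (hmu : 0 < mu)
    (hconv : ConvexOn ℝ Set.univ f)
    (hf : ContDiff ℝ 1 f)
    (φ : EuclideanSpace ℝ (Fin n) → ℝ)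
    (hφ : ∀ y, φ y = f y + mu * ∑ i, |y i|)
    (x g : EuclideanSpace ℝ (Fin n))
    (hg : ∀ i : Fin n, g i =
      if 0 < x i ∨ (x i = 0 ∧ gradient f x i + mu < 0) then gradient f x i + mu
      else if x i < 0 ∨ (x i = 0 ∧ 0 < gradient f x i - mu) then gradient f x i - mu
      else 0) :
    (∀ y, φ y ≥ φ x + ⟪g, y - x⟫_ℝ)
      ∧ ∀ v : EuclideanSpace ℝ (Fin n),
          (∀ y, φ y ≥ φ x + ⟪v, y - x⟫_ℝ) → ‖g‖ ≤ ‖v‖ := by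
  have hdiff : Differentiable ℝ f := hf.differentiable one_ne_zero
  set G : EuclideanSpace ℝ (Fin n) := gradient f x with hG
  -- properties of s i = g i - G i
  have hs : ∀ i : Fin n, |g i - G i| ≤ mu ∧ (g i - G i) * x i = mu * |x i| := by
    intro i
    rw [hg i]
    split_ifs with h1 h2
    · have hsi : G i + mu - G i = mu := by ring
      rw [hsi]
      rcases h1 with hx | ⟨hx0, _⟩
      · exact ⟨le_of_eq (abs_of_pos hmu), by rw [abs_of_pos hx]⟩
      · simp [hx0, abs_of_pos hmu]
    · have hsi : G i - mu - G i = -mu := by ring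
      rw [hsi]
      rcases h2 with hx | ⟨hx0, _⟩
      · constructor
        · simp [abs_of_pos hmu]
        · rw [abs_of_neg hx]; ring
      · simp [hx0, abs_of_pos hmu]
    · push_neg at h1 h2
      have hx0 : x i = 0 := le_antisymm h1.1 h2.1
      have hb1 : 0 ≤ G i + mu := h1.2 hx0
      have hb2 : G i - mu ≤ 0 := h2.2 hx0
      constructor
      · rw [zero_sub, abs_neg]
        exact abs_le.2 ⟨by linarith, by linarith⟩
      · simp [hx0]
  constructor
  · -- part (a)
    intro y
    have hfy := aux_convex_grad f hconv hdiff x y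
    have habs : ∀ i : Fin n, mu * |x i| + (g i - G i) * (y i - x i) ≤ mu * |y i| := by
      intro i
      obtain ⟨hs1, hs2⟩ := hs i
      have h1 : (g i - G i) * y i ≤ mu * |y i| := by
        calc (g i - G i) * y i ≤ |(g i - G i) * y i| := le_abs_self _
          _ = |g i - G i| * |y i| := abs_mul _ _
          _ ≤ mu * |y i| := mul_le_mul_of_nonneg_right hs1 (abs_nonneg _)
      nlinarith [h1, hs2]
    have hsum := Finset.sum_le_sum (fun i (_ : i ∈ Finset.univ) => habs i)
    rw [Finset.sum_add_distrib, ← Finset.mul_sum, ← Finset.mul_sum] at hsum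
    have hinner_g : ⟪g, y - x⟫_ℝ = ∑ i, g i * (y i - x i) := by
      rw [aux_inner_eq]
      exact Finset.sum_congr rfl (fun i _ => by simp)
    have hinner_G : ⟪G, y - x⟫_ℝ = ∑ i, G i * (y i - x i) := by
      rw [aux_inner_eq]
      exact Finset.sum_congr rfl (fun i _ => by simp)
    have hsplit : ∑ i, g i * (y i - x i)
        = (∑ i, G i * (y i - x i)) + ∑ i, (g i - G i) * (y i - x i) := by
      rw [← Finset.sum_add_distrib]
      exact Finset.sum_congr rfl (fun i _ => by ring)
    rw [hφ y, hφ x, hinner_g, hsplit, ← hinner_G]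
    linarith [hfy, hsum]
  · -- part (b)
    intro v hv
    -- key componentwise inequality from the subgradient property
    have key : ∀ (i : Fin n) (t : ℝ), t * v i ≤
        (f (x + t • EuclideanSpace.single i (1:ℝ)) - f x) + mu * (|x i + t| - |x i|) := by
      intro i t
      have h0 := hv (x + t • EuclideanSpace.single i (1:ℝ))
      rw [hφ, hφ] at h0
      have hinner : ⟪v, (x + t • EuclideanSpace.single i (1:ℝ)) - x⟫_ℝ = t * v i := by
        rw [add_sub_cancel_left, inner_smul_right, EuclideanSpace.inner_single_right]
        simp [mul_comm]
      rw [hinner] at h0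
      have hcoord : ∀ j : Fin n, |(x + t • EuclideanSpace.single i (1:ℝ)) j|
          = if j = i then |x i + t| else |x j| := by
        intro j
        by_cases hj : j = i
        · subst hj; simp [EuclideanSpace.single_apply]
        · simp [EuclideanSpace.single_apply, hj]
      have hsum1 : ∑ j, |(x + t • EuclideanSpace.single i (1:ℝ)) j|
          = |x i + t| + ∑ j ∈ Finset.univ.erase i, |x j| := by
        rw [Finset.sum_congr rfl (fun j _ => hcoord j),
          ← Finset.add_sum_erase _ _ (Finset.mem_univ i), if_pos rfl]
        congr 1
        exact Finset.sum_congr rfl (fun j hj => if_neg (Finset.ne_of_mem_erase hj))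
      have hsum2 : ∑ j, |x j| = |x i| + ∑ j ∈ Finset.univ.erase i, |x j| :=
        (Finset.add_sum_erase _ _ (Finset.mem_univ i)).symm
      rw [hsum1, hsum2] at h0
      nlinarith [h0]
    -- derivative of t ↦ f (x + t e_i)
    have hder : ∀ i : Fin n,
        HasDerivAt (fun t : ℝ => f (x + t • EuclideanSpace.single i (1:ℝ))) (G i) 0 := by
      intro i
      have := aux_hasDerivAt_line f x (EuclideanSpace.single i (1:ℝ)) (hdiff x)
      have hG' : ⟪gradient f x, EuclideanSpace.single i (1:ℝ)⟫_ℝ = G i := by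
        rw [EuclideanSpace.inner_single_right]; simp [hG]
      rwa [hG'] at this
    have hslope : ∀ (i : Fin n) (t : ℝ),
        slope (fun s : ℝ => f (x + s • EuclideanSpace.single i (1:ℝ))) 0 t
          = (f (x + t • EuclideanSpace.single i (1:ℝ)) - f x) / t := by
      intro i t
      rw [slope_def_field]
      simp
    -- the four claims
    have claim1 : ∀ i : Fin n, v i ≤ G i + mu := by
      intro i
      have hb : ∀ᶠ t in nhdsWithin 0 (Set.Ioi 0), (v i - mu) ≤
          slope (fun s : ℝ => f (x + s • EuclideanSpace.single i (1:ℝ))) 0 t := by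
        refine Filter.eventually_of_mem self_mem_nhdsWithin (fun t ht => ?_)
        have ht' : (0:ℝ) < t := ht
        rw [hslope i t, le_div_iff₀ ht']
        have habs : |x i + t| - |x i| ≤ t := by
          have := abs_add_le (x i) t
          rw [abs_of_pos ht'] at this
          linarith
        have := mul_le_mul_of_nonneg_left habs hmu.le
        linarith [key i t]
      linarith [aux_le_of_slope_right (hder i) hb]
    have claim2 : ∀ i : Fin n, G i - mu ≤ v i := by
      intro i
      have hb : ∀ᶠ t in nhdsWithin 0 (Set.Iio 0),
          slope (fun s : ℝ => f (x + s • EuclideanSpace.single i (1:ℝ))) 0 t ≤ v i + mu := by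
        refine Filter.eventually_of_mem self_mem_nhdsWithin (fun t ht => ?_)
        have ht' : t < (0:ℝ) := ht
        rw [hslope i t, div_le_iff_of_neg ht']
        have habs : |x i + t| - |x i| ≤ -t := by
          have := abs_add_le (x i) t
          rw [abs_of_neg ht'] at this
          linarith
        have := mul_le_mul_of_nonneg_left habs hmu.le
        linarith [key i t]
      linarith [aux_le_of_slope_left (hder i) hb]
    have claim3 : ∀ i : Fin n, 0 < x i → G i + mu ≤ v i := by
      intro i hxi
      have hmem : Set.Ioo (-(x i)) 0 ∈ nhdsWithin (0:ℝ) (Set.Iio 0) :=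
        Ioo_mem_nhdsLT_of_mem ⟨by linarith, le_refl 0⟩
      have hb : ∀ᶠ t in nhdsWithin 0 (Set.Iio 0),
          slope (fun s : ℝ => f (x + s • EuclideanSpace.single i (1:ℝ))) 0 t ≤ v i - mu := by
        refine Filter.eventually_of_mem hmem (fun t ht => ?_)
        obtain ⟨ht1, ht2⟩ := ht
        rw [hslope i t, div_le_iff_of_neg ht2]
        have habs : |x i + t| - |x i| = t := by
          rw [abs_of_pos (by linarith : 0 < x i + t), abs_of_pos hxi]; ring
        have hk := key i t
        rw [habs] at hk
        linarith
      linarith [aux_le_of_slope_left (hder i) hb]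
    have claim4 : ∀ i : Fin n, x i < 0 → v i ≤ G i - mu := by
      intro i hxi
      have hmem : Set.Ioo (0:ℝ) (-(x i)) ∈ nhdsWithin (0:ℝ) (Set.Ioi 0) :=
        Ioo_mem_nhdsGT_of_mem ⟨le_refl 0, by linarith⟩
      have hb : ∀ᶠ t in nhdsWithin 0 (Set.Ioi 0), (v i + mu) ≤
          slope (fun s : ℝ => f (x + s • EuclideanSpace.single i (1:ℝ))) 0 t := by
        refine Filter.eventually_of_mem hmem (fun t ht => ?_)
        obtain ⟨ht1, ht2⟩ := ht
        rw [hslope i t, le_div_iff₀ ht1]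
        have habs : |x i + t| - |x i| = -t := by
          rw [abs_of_neg (by linarith : x i + t < 0), abs_of_neg hxi]; ring
        have hk := key i t
        rw [habs] at hk
        linarith
      linarith [aux_le_of_slope_right (hder i) hb]
    -- pointwise nonnegativity of g i * (v i - g i)
    have hpt : ∀ i : Fin n, 0 ≤ g i * (v i - g i) := by
      intro i
      rw [hg i]
      split_ifs with h1 h2
      · rcases h1 with hx | ⟨hx0, hneg⟩
        · have hv1 := claim1 i
          have hv3 := claim3 i hx
          have : v i = G i + mu := le_antisymm hv1 hv3
          rw [this]; ring_nf; simp
        · have hv1 := claim1 i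
          nlinarith [hv1, hneg]
      · rcases h2 with hx | ⟨hx0, hpos⟩
        · have hv2 := claim2 i
          have hv4 := claim4 i hx
          have : v i = G i - mu := le_antisymm hv4 hv2
          rw [this]; ring_nf; simp
        · have hv2 := claim2 i
          nlinarith [hv2, hpos]
      · simp
    have hinnerpos : 0 ≤ ⟪g, v - g⟫_ℝ := by
      rw [aux_inner_eq]
      refine Finset.sum_nonneg (fun i _ => ?_)
      simpa using hpt i
    have hid : g + (v - g) = v := by abel
    have hnorm := norm_add_sq_real g (v - g)
    rw [hid] at hnorm
    nlinarith [norm_nonneg v, norm_nonneg g, sq_nonneg ‖v - g‖, hinnerpos, hnorm]
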